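/- arXiv:2104.02099 — 3 statements merged into one kernel-verified Lean document; each statement's English description precedes it below -/
import Mathlib

section
/- For every real α > 0, the equation r + ∑_{n=2}^∞ 4 r^n/(α n² + (1−α) n) = 1 + ∑_{n=2}^∞ 2(−1)^{n−1}/(α n² + (1−α) n) has a unique solution r in the open interval (0,1). -/
open Set

private noncomputable def dd (α : ℝ) (n : ℕ) : ℝ :=
  α * ((n : ℝ) + 2) ^ 2 + (1 - α) * ((n : ℝ) + 2)

private noncomputable def tt (α : ℝ) (n : ℕ) : ℝ := 2 * (-1 : ℝ) ^ (n + 1) / dd α n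

private noncomputable def FF (α r : ℝ) : ℝ := r + ∑' n : ℕ, 4 * r ^ (n + 2) / dd α n

private noncomputable def CC (α : ℝ) : ℝ := 1 + ∑' n : ℕ, tt α n

private lemma dd_eq (α : ℝ) (n : ℕ) : dd α n = ((n:ℝ)+2) * (α*((n:ℝ)+1)+1) := by
  unfold dd; ring

private lemma dd_pos {α : ℝ} (hα : 0 < α) (n : ℕ) : 0 < dd α n := by
  rw [dd_eq]
  have : (0:ℝ) ≤ (n:ℝ) := Nat.cast_nonneg n
  positivity

private lemma dd_mono {α : ℝ} (hα : 0 < α) {n m : ℕ} (h : n ≤ m) : dd α n ≤ dd α m := by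
  have hnm : (n:ℝ) ≤ (m:ℝ) := Nat.cast_le.mpr h
  have h0n : (0:ℝ) ≤ (n:ℝ) := Nat.cast_nonneg n
  have hkey : dd α m - dd α n = ((m:ℝ)-(n:ℝ)) * (α*((m:ℝ)+(n:ℝ)+3)+1) := by
    unfold dd; ring
  have h1 : (0:ℝ) ≤ ((m:ℝ)-(n:ℝ)) * (α*((m:ℝ)+(n:ℝ)+3)+1) := by
    have hm : (0:ℝ) ≤ (m:ℝ) := Nat.cast_nonneg m
    have : (0:ℝ) < α*((m:ℝ)+(n:ℝ)+3)+1 := by positivity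
    exact mul_nonneg (by linarith) this.le
  linarith

private lemma summable_inv_dd {α : ℝ} (hα : 0 < α) : Summable (fun n : ℕ => 1 / dd α n) := by
  have h2 : Summable (fun n : ℕ => 1 / ((n:ℝ)+1) ^ 2) := by
    have h := Real.summable_one_div_nat_pow.mpr (show 1 < 2 by norm_num)
    have := (summable_nat_add_iff (f := fun n : ℕ => 1 / (n:ℝ) ^ 2) 1).mpr h
    simpa using this
  refine Summable.of_nonneg_of_le (fun n => ?_) (fun n => ?_) (h2.mul_left α⁻¹)
  · have := dd_pos hα n; positivity
  · have hn : (0:ℝ) ≤ (n:ℝ) := Nat.cast_nonneg n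
    have hb : α * ((n:ℝ)+1)^2 ≤ dd α n := by
      rw [dd_eq]; nlinarith
    have hbpos : (0:ℝ) < α * ((n:ℝ)+1)^2 := by positivity
    calc 1 / dd α n ≤ 1 / (α * ((n:ℝ)+1)^2) := one_div_le_one_div_of_le hbpos hb
      _ = α⁻¹ * (1 / ((n:ℝ)+1)^2) := by field_simp

private lemma summable_four {α : ℝ} (hα : 0 < α) : Summable (fun n : ℕ => 4 / dd α n) := by
  simpa [div_eq_mul_inv] using (summable_inv_dd hα).mul_left 4

private lemma summable_pow {α : ℝ} (hα : 0 < α) {r : ℝ} (h0 : 0 ≤ r) (h1 : r ≤ 1) :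
    Summable (fun n : ℕ => 4 * r ^ (n + 2) / dd α n) := by
  refine Summable.of_nonneg_of_le (fun n => ?_) (fun n => ?_) (summable_four hα)
  · have := dd_pos hα n; positivity
  · have hd := dd_pos hα n
    have hp : r ^ (n+2) ≤ 1 := pow_le_one₀ h0 h1
    calc 4 * r ^ (n+2) / dd α n ≤ 4 * 1 / dd α n := by gcongr
      _ = 4 / dd α n := by ring

private lemma summable_t {α : ℝ} (hα : 0 < α) : Summable (tt α) := by
  refine Summable.of_norm_bounded (summable_four hα) (fun n => ?_)
  have hd := dd_pos hα n
  unfold tt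
  rw [Real.norm_eq_abs, abs_div, abs_mul, abs_pow, abs_neg, abs_one, one_pow,
    abs_of_pos hd]
  have h2 : |(2:ℝ)| = 2 := by norm_num
  rw [h2, mul_one]
  gcongr
  norm_num

private lemma FF_strictMono {α : ℝ} (hα : 0 < α) : StrictMonoOn (FF α) (Icc (0:ℝ) 1) := by
  intro x hx y hy hxy
  unfold FF
  refine add_lt_add_of_lt_of_le hxy ((summable_pow hα hx.1 hx.2).tsum_le_tsum (fun n => ?_)
    (summable_pow hα hy.1 hy.2))
  have hd := dd_pos hα n
  gcongr
  all_goals first | exact hx.1 | exact hxy.le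

private lemma FF_cont {α : ℝ} (hα : 0 < α) : ContinuousOn (FF α) (Icc (0:ℝ) 1) := by
  rw [continuousOn_iff_continuous_restrict]
  have h1 : Continuous (fun x : Icc (0:ℝ) 1 => ∑' n : ℕ, 4 * (x:ℝ) ^ (n + 2) / dd α n) := by
    refine continuous_tsum (fun n => ?_) (summable_four hα) (fun n x => ?_)
    · fun_prop
    · have hd := dd_pos hα n
      have hx0 : (0:ℝ) ≤ (x:ℝ) := x.2.1
      have hx1 : (x:ℝ) ≤ 1 := x.2.2
      rw [Real.norm_eq_abs, abs_of_nonneg (by positivity)]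
      have hp : (x:ℝ) ^ (n+2) ≤ 1 := pow_le_one₀ hx0 hx1
      calc 4 * (x:ℝ) ^ (n+2) / dd α n ≤ 4 * 1 / dd α n := by gcongr
        _ = 4 / dd α n := by ring
  exact continuous_subtype_val.add h1

private lemma FF_zero (α : ℝ) : FF α 0 = 0 := by
  unfold FF
  simp

private lemma tt_odd (α : ℝ) (k : ℕ) : tt α (2*k+1) = 2 / dd α (2*k+1) := by
  unfold tt
  have : (-1 : ℝ) ^ (2*k+1+1) = 1 := Even.neg_one_pow ⟨k+1, by ring⟩
  rw [this, mul_one]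

private lemma tt_even (α : ℝ) (k : ℕ) : tt α (2*k+2) = -(2 / dd α (2*k+2)) := by
  unfold tt
  have : (-1 : ℝ) ^ (2*k+2+1) = -1 := Odd.neg_one_pow ⟨k+1, by ring⟩
  rw [this]
  ring

private lemma CC_pos {α : ℝ} (hα : 0 < α) : 0 < CC α := by
  have hSt : Summable (tt α) := summable_t hα
  have hg : Summable (fun n => tt α (n+1)) := (summable_nat_add_iff 1).mpr hSt
  have hinj1 : Function.Injective (fun k : ℕ => 2*k) := fun a b h => by
    dsimp at h; omega
  have hinj2 : Function.Injective (fun k : ℕ => 2*k+1) := fun a b h => by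
    dsimp at h; omega
  have he : Summable (fun k : ℕ => tt α (2*k+1)) := by
    have := hg.comp_injective hinj1
    exact this
  have ho : Summable (fun k : ℕ => tt α (2*k+2)) := by
    have := hg.comp_injective hinj2
    exact this
  have htail : 0 ≤ ∑' n, tt α (n+1) := by
    have heo : (∑' k : ℕ, tt α (2*k+1)) + (∑' k : ℕ, tt α (2*k+2)) = ∑' n, tt α (n+1) :=
      tsum_even_add_odd (f := fun n => tt α (n+1)) he ho
    rw [← heo, ← he.tsum_add ho]
    refine tsum_nonneg (fun k => ?_)
    rw [tt_odd, tt_even]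
    have h1 := dd_pos hα (2*k+1)
    have h2 := dd_mono hα (show 2*k+1 ≤ 2*k+2 by omega)
    have : 2 / dd α (2*k+2) ≤ 2 / dd α (2*k+1) := by gcongr
    linarith
  have hhead : tt α 0 = -(1/(α+1)) := by
    unfold tt dd
    norm_num
    have h1 : α + 1 ≠ 0 := by linarith
    have h2 : α * 4 + (1 - α) * 2 ≠ 0 := by intro h; apply h1; linarith
    have h3 : 2 + α * 2 ≠ 0 := by positivity
    have h4 : (2 + α * 2)⁻¹ = (1 + α)⁻¹ / 2 := by
      rw [show (2:ℝ) + α * 2 = 2 * (1 + α) by ring, mul_inv]; ring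
    linear_combination (-2:ℝ) * h4
  have hsum : CC α = 1 + (tt α 0 + ∑' n, tt α (n+1)) := by
    unfold CC
    rw [hSt.tsum_eq_zero_add]
  have hfrac : 1/(α+1) < 1 := by
    rw [div_lt_one (by linarith)]; linarith
  rw [hsum, hhead]
  linarith

private lemma CC_lt_FF_one {α : ℝ} (hα : 0 < α) : CC α < FF α 1 := by
  unfold CC FF
  have h1 : ∑' n : ℕ, tt α n < ∑' n : ℕ, 4 * (1:ℝ) ^ (n + 2) / dd α n := by
    refine Summable.tsum_lt_tsum (i := 0) (fun n => ?_) ?_ (summable_t hα)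
      (summable_pow hα zero_le_one le_rfl)
    · have hd := dd_pos hα n
      have hle : (-1:ℝ) ^ (n+1) ≤ 1 := by
        rcases Nat.even_or_odd (n+1) with h | h
        · rw [h.neg_one_pow]
        · rw [h.neg_one_pow]; norm_num
      unfold tt
      rw [one_pow, mul_one]
      exact (div_le_div_iff_of_pos_right hd).mpr (by nlinarith)
    · have hd := dd_pos hα 0
      unfold tt
      have h1 : (-1:ℝ) ^ (0+1) = -1 := by norm_num
      rw [h1, one_pow, mul_one]
      exact (div_lt_div_iff_of_pos_right hd).mpr (by norm_num)
  linarith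

private lemma key (α : ℝ) (hα : 0 < α) :
    ∃! r : ℝ, r ∈ Ioo (0:ℝ) 1 ∧ FF α r = CC α := by
  have hmem : CC α ∈ Ioo (FF α 0) (FF α 1) := by
    constructor
    · rw [FF_zero]; exact CC_pos hα
    · exact CC_lt_FF_one hα
  obtain ⟨r, hr, hFr⟩ := intermediate_value_Ioo zero_le_one (FF_cont hα) hmem
  refine ⟨r, ⟨hr, hFr⟩, ?_⟩
  rintro s ⟨hs, hFs⟩
  exact (FF_strictMono hα).injOn (Ioo_subset_Icc_self hs) (Ioo_subset_Icc_self hr)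
    (by rw [hFs, hFr])

theorem stmt10 (α : ℝ) (hα : 0 < α) :
    ∃! r : ℝ, r ∈ Set.Ioo (0 : ℝ) 1 ∧
      r + (∑' n : ℕ, 4 * r ^ (n + 2) / (α * ((n : ℝ) + 2) ^ 2 + (1 - α) * ((n : ℝ) + 2)))
        = 1 + ∑' n : ℕ, 2 * (-1 : ℝ) ^ (n + 1) / (α * ((n : ℝ) + 2) ^ 2 + (1 - α) * ((n : ℝ) + 2)) := by
  have h := key α hα
  simpa [FF, CC, tt, dd] using h
end

section
/- For every real α > 0, the equation 2r + ∑_{n=2}^∞ 4 r^n/(α n² + (1−α) n) = 1 + ∑_{n=2}^∞ 2(−1)^{n−1}/(α n² + (1−α) n) has a unique solution r in the open interval (0,1). -/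
open Filter

theorem stmt11 (α : ℝ) (hα : 0 < α) :
    ∃! r : ℝ, r ∈ Set.Ioo (0 : ℝ) 1 ∧
      2 * r + (∑' n : ℕ, 4 * r ^ (n + 2) / (α * ((n : ℝ) + 2) ^ 2 + (1 - α) * ((n : ℝ) + 2)))
        = 1 + ∑' n : ℕ, 2 * (-1 : ℝ) ^ (n + 1) / (α * ((n : ℝ) + 2) ^ 2 + (1 - α) * ((n : ℝ) + 2)) := by
  set d : ℕ → ℝ := fun n => α * ((n : ℝ) + 2) ^ 2 + (1 - α) * ((n : ℝ) + 2) with hd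
  have hdfac : ∀ n, d n = ((n : ℝ) + 2) * (α * ((n : ℝ) + 1) + 1) := by
    intro n; simp only [hd]; ring
  have hdge : ∀ n : ℕ, α * (((n : ℝ) + 1) * ((n : ℝ) + 2)) ≤ d n := by
    intro n
    rw [hdfac]
    have h1 : (0:ℝ) ≤ (n:ℝ) + 2 := by positivity
    nlinarith [Nat.cast_nonneg (α := ℝ) n]
  have hdpos : ∀ n, 0 < d n := by
    intro n
    refine lt_of_lt_of_le ?_ (hdge n)
    positivity
  have hdmono : ∀ n m : ℕ, n ≤ m → d n ≤ d m := by
    intro n m hnm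
    have : (n:ℝ) ≤ m := by exact_mod_cast hnm
    rw [hdfac, hdfac]
    nlinarith [Nat.cast_nonneg (α := ℝ) n, mul_nonneg (mul_nonneg hα.le (sub_nonneg.mpr this)) (by positivity : (0:ℝ) ≤ (n:ℝ)+(m:ℝ)+3), sub_nonneg.mpr this]
  -- summability of 1/d
  have hsum0 : Summable (fun n : ℕ => (d n)⁻¹) := by
    have hbase : Summable (fun n : ℕ => (α * (((n : ℝ) + 1) * ((n : ℝ) + 2)))⁻¹) := by
      have h1 : Summable (fun n : ℕ => (((n : ℝ) + 1) ^ 2)⁻¹) := by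
        have := (summable_nat_add_iff (f := fun n : ℕ => ((n : ℝ) ^ 2)⁻¹) 1).mpr ?_
        · simpa using this
        · simpa using summable_one_div_nat_pow.mpr (le_refl 2)
      have h2 : Summable (fun n : ℕ => ((((n : ℝ) + 1) * ((n : ℝ) + 2)))⁻¹) := by
        refine Summable.of_nonneg_of_le (fun n => by positivity) (fun n => ?_) h1
        refine inv_anti₀ (by positivity) ?_
        nlinarith [Nat.cast_nonneg (α := ℝ) n]
      have := h2.mul_left α⁻¹
      refine this.congr fun n => ?_
      field_simp
    refine Summable.of_nonneg_of_le (fun n => inv_nonneg.mpr (hdpos n).le) (fun n => ?_) hbase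
    exact inv_anti₀ (by positivity) (hdge n)
  have hsumA : Summable (fun n : ℕ => 2 * (-1 : ℝ) ^ (n + 1) / d n) := by
    refine Summable.of_abs (Summable.of_nonneg_of_le (fun n => abs_nonneg _) (fun n => ?_) (hsum0.mul_left 2))
    rw [abs_div, abs_of_pos (hdpos n), abs_mul, abs_pow, abs_neg, abs_one, one_pow, mul_one,
      div_eq_mul_inv]
    simp
  have hsumF : ∀ r : ℝ, |r| ≤ 1 → Summable (fun n : ℕ => 4 * r ^ (n + 2) / d n) := by
    intro r hr
    refine Summable.of_abs (Summable.of_nonneg_of_le (fun n => abs_nonneg _) (fun n => ?_) (hsum0.mul_left 4))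
    rw [abs_div, abs_of_pos (hdpos n), abs_mul, abs_pow, div_eq_mul_inv]
    have : |r| ^ (n + 2) ≤ 1 := pow_le_one₀ (abs_nonneg r) hr
    have h4 : |(4:ℝ)| = 4 := by norm_num
    rw [h4]
    have := mul_le_mul_of_nonneg_left this (by norm_num : (0:ℝ) ≤ 4)
    have := mul_le_mul_of_nonneg_right this (inv_nonneg.mpr (hdpos n).le)
    simpa using this
  set F : ℝ → ℝ := fun r => 2 * r + ∑' n : ℕ, 4 * r ^ (n + 2) / d n with hF
  set S : ℝ := ∑' n : ℕ, 2 * (-1 : ℝ) ^ (n + 1) / d n with hS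
  -- continuity
  have hcont : ContinuousOn F (Set.Icc (0:ℝ) 1) := by
    refine (continuous_mul_left 2).continuousOn.add ?_
    have hTU := tendstoUniformlyOn_tsum (u := fun n : ℕ => 4 * (d n)⁻¹)
      (hsum0.mul_left 4) (f := fun n (r : ℝ) => 4 * r ^ (n + 2) / d n)
      (s := Set.Icc (0:ℝ) 1) ?_
    · refine hTU.continuousOn (Eventually.of_forall fun t => ?_).frequently
      exact (continuousOn_finset_sum t fun i _ => Continuous.continuousOn (by continuity))
    · intro n x hx
      rw [Real.norm_eq_abs, abs_div, abs_of_pos (hdpos n), abs_mul, abs_pow, div_eq_mul_inv]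
      have hx01 : 0 ≤ x ∧ x ≤ 1 := hx
      have : |x| ^ (n + 2) ≤ 1 := pow_le_one₀ (abs_nonneg x) (abs_le.mpr ⟨by linarith [hx01.1], hx01.2⟩)
      have h4 : |(4:ℝ)| = 4 := by norm_num
      rw [h4]
      have := mul_le_mul_of_nonneg_left this (by norm_num : (0:ℝ) ≤ 4)
      have := mul_le_mul_of_nonneg_right this (inv_nonneg.mpr (hdpos n).le)
      simpa using this
  have hF0 : F 0 = 0 := by
    simp [hF, zero_pow]
  -- S > -1
  have hSgt : -1 < S := by
    have htail : 0 ≤ ∑' n : ℕ, 2 * (-1 : ℝ) ^ (n + 1 + 1) / d (n + 1) := by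
      set g : ℕ → ℝ := fun n => 2 * (-1 : ℝ) ^ (n + 1 + 1) / d (n + 1) with hg
      have hsg : Summable g := by
        refine Summable.of_abs (Summable.of_nonneg_of_le (fun n => abs_nonneg _)
          (fun n => ?_) ((hsum0.mul_left 2).comp_injective (add_left_injective 1)))
        rw [hg]
        simp only [abs_div, abs_mul, abs_pow, abs_neg, abs_one, one_pow, mul_one,
          abs_of_pos (hdpos (n + 1)), Function.comp]
        rw [div_eq_mul_inv]
        simp
      have h2k : Summable (fun k => g (2 * k)) :=
        hsg.comp_injective (fun a b h => by omega)
      have h2k1 : Summable (fun k => g (2 * k + 1)) :=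
        hsg.comp_injective (fun a b h => by omega)
      rw [← tsum_even_add_odd h2k h2k1, ← Summable.tsum_add h2k h2k1]
      refine tsum_nonneg fun k => ?_
      have he : g (2 * k) = 2 / d (2 * k + 1) := by
        simp only [hg]
        have : (-1 : ℝ) ^ (2 * k + 1 + 1) = 1 := by
          rw [pow_succ, pow_succ, pow_mul]; norm_num
        rw [this, mul_one]
      have ho : g (2 * k + 1) = -(2 / d (2 * k + 2)) := by
        simp only [hg]
        have : (-1 : ℝ) ^ (2 * k + 1 + 1 + 1) = -1 := by
          rw [pow_succ, pow_succ, pow_succ, pow_mul]; norm_num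
        rw [this]
        ring
      rw [he, ho]
      have := div_le_div_of_nonneg_left (by norm_num : (0:ℝ) ≤ 2) (hdpos (2*k+1))
        (hdmono (2*k+1) (2*k+2) (by omega))
      linarith
    have hhead : 2 * (-1 : ℝ) ^ (0 + 1) / d 0 = -(2 / (2 * α + 2)) := by
      have hd0 : d 0 = 2 * α + 2 := by rw [hdfac]; norm_num; ring
      rw [hd0]; norm_num [neg_div]
    have := Summable.tsum_eq_zero_add hsumA
    rw [hS, this, hhead]
    have h1 : 2 / (2 * α + 2) < 1 := by
      rw [div_lt_one (by linarith)]; linarith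
    linarith
  have hSC : F 0 < 1 + S := by rw [hF0]; linarith
  have hF1 : 1 + S < F 1 := by
    have hT : S ≤ ∑' n : ℕ, 4 * (1:ℝ) ^ (n + 2) / d n := by
      refine Summable.tsum_le_tsum (fun n => ?_) hsumA (hsumF 1 (by norm_num))
      rw [one_pow]
      refine div_le_div_of_nonneg_right ?_ (hdpos n).le |>.trans_eq rfl
      have : (-1 : ℝ) ^ (n + 1) ≤ 1 := by
        rcases neg_one_pow_eq_one_iff_even (R := ℝ) (n := n+1) (by norm_num) |>.symm with h
        rcases Nat.even_or_odd (n + 1) with he | ho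
        · rw [he.neg_one_pow]
        · rw [ho.neg_one_pow]; norm_num
      nlinarith
    rw [hF]
    simp only
    linarith
  -- existence via IVT
  have hsub := intermediate_value_Ioo (by norm_num : (0:ℝ) ≤ 1) hcont
  have hmem : 1 + S ∈ Set.Ioo (F 0) (F 1) := ⟨hSC, hF1⟩
  obtain ⟨r, hr, hreq⟩ := hsub hmem
  -- strict monotonicity
  have hmonoF : ∀ x y : ℝ, 0 ≤ x → x < y → y ≤ 1 → F x < F y := by
    intro x y hx hxy hy1
    have hxle : |x| ≤ 1 := abs_le.mpr ⟨by linarith, by linarith⟩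
    have hyle : |y| ≤ 1 := abs_le.mpr ⟨by linarith, by linarith⟩
    have hts : (∑' n : ℕ, 4 * x ^ (n + 2) / d n) ≤ ∑' n : ℕ, 4 * y ^ (n + 2) / d n := by
      refine Summable.tsum_le_tsum (fun n => ?_) (hsumF x hxle) (hsumF y hyle)
      refine div_le_div_of_nonneg_right ?_ (hdpos n).le |>.trans_eq rfl
      have := pow_le_pow_left₀ hx hxy.le (n + 2)
      nlinarith
    rw [hF]
    simp only
    linarith
  refine ⟨r, ⟨hr, ?_⟩, ?_⟩
  · exact hreq
  · rintro y ⟨hy, hyeq⟩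
    have hyF : F y = 1 + S := hyeq
    have hrF : F r = 1 + S := hreq
    rcases lt_trichotomy y r with h | h | h
    · exact absurd (hyF.trans hrF.symm) (ne_of_lt (hmonoF y r hy.1.le h hr.2.le))
    · exact h
    · exact absurd (hrF.trans hyF.symm) (ne_of_lt (hmonoF r y hr.1.le h hy.2.le))
end

section
/- The function H₁(r) = (8/r)(1−r)·log(1−r) − 3r + 13 − 8·log 2 has a unique zero in (0,1); equivalently, there is a unique r ∈ (0,1) with r + ∑_{n=2}^∞ 8 r^n/(n²+n) = 1 + 2(−3 + 4 log 2). -/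
open Real Set

lemma sum_closed {r : ℝ} (hr0 : 0 < r) (hr1 : r < 1) :
    HasSum (fun n : ℕ => 8 * r ^ (n + 2) / (((n : ℝ) + 2) ^ 2 + ((n : ℝ) + 2)))
      (8 - 4 * r + (8 / r) * (1 - r) * Real.log (1 - r)) := by
  have habs : |r| < 1 := by rw [abs_of_pos hr0]; exact hr1
  have hlog := Real.hasSum_pow_div_log_of_abs_lt_one habs
  have hA : HasSum (fun n : ℕ => r ^ (n + 2) / ((n : ℝ) + 2))
      (-Real.log (1 - r) - r) := by
    have := (hasSum_nat_add_iff' (f := fun n : ℕ => r ^ (n + 1) / ((n : ℝ) + 1)) 1).mpr hlog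
    convert this using 1
    rfl
    · funext n; push_cast; ring_nf
    · norm_num
  have hB : HasSum (fun n : ℕ => r ^ (n + 3) / ((n : ℝ) + 3))
      (-Real.log (1 - r) - r - r ^ 2 / 2) := by
    have := (hasSum_nat_add_iff' (f := fun n : ℕ => r ^ (n + 1) / ((n : ℝ) + 1)) 2).mpr hlog
    convert this using 1
    rfl
    · funext n; push_cast; ring_nf
    · simp [Finset.sum_range_succ]; ring_nf
  have hB' : HasSum (fun n : ℕ => r ^ (n + 2) / ((n : ℝ) + 3))
      ((1 / r) * (-Real.log (1 - r) - r - r ^ 2 / 2)) := by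
    have := hB.mul_left (1 / r)
    convert this using 1
    rfl
    funext n
    have h3 : ((n : ℝ) + 3) ≠ 0 := by positivity
    field_simp
    ring
  have h := (hA.sub hB').mul_left 8
  convert h using 1
  rfl
  · funext n
    have h2 : ((n : ℝ) + 2) ≠ 0 := by positivity
    have h3 : ((n : ℝ) + 3) ≠ 0 := by positivity
    field_simp
    ring
  · field_simp
    ring

theorem stmt14 :
    (∃! r : ℝ, r ∈ Set.Ioo (0 : ℝ) 1 ∧
      (8 / r) * (1 - r) * Real.log (1 - r) - 3 * r + 13 - 8 * Real.log 2 = 0) ∧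
    (∃! r : ℝ, r ∈ Set.Ioo (0 : ℝ) 1 ∧
      r + (∑' n : ℕ, 8 * r ^ (n + 2) / (((n : ℝ) + 2) ^ 2 + ((n : ℝ) + 2)))
        = 1 + 2 * (-3 + 4 * Real.log 2)) := by
  set g : ℝ → ℝ := fun r => 8 - 3 * r + (8 / r) * (1 - r) * Real.log (1 - r) with hg
  set c : ℝ := -5 + 8 * Real.log 2 with hc
  have htsum : ∀ r ∈ Set.Ioo (0 : ℝ) 1,
      (∑' n : ℕ, 8 * r ^ (n + 2) / (((n : ℝ) + 2) ^ 2 + ((n : ℝ) + 2)))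
        = 8 - 4 * r + (8 / r) * (1 - r) * Real.log (1 - r) := fun r hr =>
    (sum_closed hr.1 hr.2).tsum_eq
  have hmono : StrictMonoOn g (Set.Ioo (0 : ℝ) 1) := by
    intro a ha b hb hab
    have hA := sum_closed ha.1 ha.2
    have hB := sum_closed hb.1 hb.2
    have hle : (8 - 4 * a + (8 / a) * (1 - a) * Real.log (1 - a))
        ≤ (8 - 4 * b + (8 / b) * (1 - b) * Real.log (1 - b)) := by
      refine hasSum_le (fun n => ?_) hA hB
      gcongr
      exacts [ha.1.le]
    simp only [hg]
    nlinarith [hle]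
  have hcont : ContinuousOn g (Set.Icc (1/16 : ℝ) (3/4)) := by
    apply ContinuousOn.add
    · fun_prop
    · apply ContinuousOn.mul
      · apply ContinuousOn.mul
        · apply ContinuousOn.div continuousOn_const continuousOn_id
          intro x hx; simp only [id]; intro h; rw [h] at hx
          exact absurd hx.1 (by norm_num)
        · fun_prop
      · apply Real.continuousOn_log.comp (by fun_prop)
        intro x hx
        simp only [Set.mem_compl_iff, Set.mem_singleton_iff]
        intro h
        have : x = 1 := by linarith [sub_eq_zero.mp h]
        rw [this] at hx
        exact absurd hx.2 (by norm_num)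
  have hlog2 : Real.log 2 < 0.6931471808 := Real.log_two_lt_d9
  have hlog2' : (0.6931471803 : ℝ) < Real.log 2 := Real.log_two_gt_d9
  have hva : g (1/16) < c := by
    have h1 : Real.log (1 - 1/16 : ℝ) ≤ -(1/16) := by
      have := Real.log_le_sub_one_of_pos (x := (15/16 : ℝ)) (by norm_num)
      norm_num at this ⊢; linarith
    simp only [hg, hc]
    nlinarith [h1]
  have hvb : c < g (3/4) := by
    have h1 : Real.log (1 - 3/4 : ℝ) = -(2 * Real.log 2) := by
      rw [show (1 - 3/4 : ℝ) = (2 : ℝ)⁻¹ ^ 2 by norm_num, Real.log_pow,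
        Real.log_inv]
      push_cast; ring
    simp only [hg, hc, h1]
    nlinarith
  obtain ⟨r, hr, hgr⟩ : ∃ r ∈ Set.Icc (1/16 : ℝ) (3/4), g r = c := by
    have := intermediate_value_Icc (by norm_num : (1/16:ℝ) ≤ 3/4) hcont
    obtain ⟨r, hr, hgr⟩ := this ⟨hva.le, hvb.le⟩
    exact ⟨r, hr, hgr⟩
  have hrIoo : r ∈ Set.Ioo (0 : ℝ) 1 := ⟨lt_of_lt_of_le (by norm_num) hr.1,
    lt_of_le_of_lt hr.2 (by norm_num)⟩
  have key : ∀ s ∈ Set.Ioo (0:ℝ) 1,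
      ((8 / s) * (1 - s) * Real.log (1 - s) - 3 * s + 13 - 8 * Real.log 2 = 0 ↔ g s = c) := by
    intro s _; simp only [hg, hc]; constructor <;> intro h <;> linarith
  have key2 : ∀ s ∈ Set.Ioo (0:ℝ) 1,
      (s + (∑' n : ℕ, 8 * s ^ (n + 2) / (((n : ℝ) + 2) ^ 2 + ((n : ℝ) + 2)))
        = 1 + 2 * (-3 + 4 * Real.log 2) ↔ g s = c) := by
    intro s hs
    rw [htsum s hs]
    simp only [hg, hc]; constructor <;> intro h <;> linarith
  have huniq : ∀ s ∈ Set.Ioo (0:ℝ) 1, g s = c → s = r := by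
    intro s hs hgs
    rcases lt_trichotomy s r with h | h | h
    · have := hmono hs hrIoo h; rw [hgs, hgr] at this; exact absurd this (lt_irrefl c)
    · exact h
    · have := hmono hrIoo hs h; rw [hgs, hgr] at this; exact absurd this (lt_irrefl c)
  constructor
  · exact ⟨r, ⟨hrIoo, (key r hrIoo).mpr hgr⟩,
      fun s ⟨hs, hse⟩ => huniq s hs ((key s hs).mp hse)⟩
  · exact ⟨r, ⟨hrIoo, (key2 r hrIoo).mpr hgr⟩,
      fun s ⟨hs, hse⟩ => huniq s hs ((key2 s hs).mp hse)⟩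
end
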